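/- Let P = diag(e^{iθ}, e^{-iθ}) with sin(θ) ≠ 0, and ζ_t = exp(t·F(P)). Then ζ_t = P if and only if there exists k ∈ ℤ with t·sin(θ) = θ + 2πk; in particular ζ_{θ/sin θ} = P. -/

import Mathlib

open Matrix Complex

noncomputable def Fvar (P : Matrix (Fin 2) (Fin 2) ℂ) : Matrix (Fin 2) (Fin 2) ℂ :=
  P - (P.trace / 2) • (1 : Matrix (Fin 2) (Fin 2) ℂ)

noncomputable def Pθ (θ : ℝ) : Matrix (Fin 2) (Fin 2) ℂ :=
  !![Complex.exp (I * θ), 0; 0, Complex.exp (-(I * θ))]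

noncomputable def ζ (θ : ℝ) (t : ℝ) : Matrix (Fin 2) (Fin 2) ℂ :=
  NormedSpace.exp ((t : ℂ) • Fvar (Pθ θ))

lemma Pθ_diag (θ : ℝ) : Pθ θ = Matrix.diagonal ![Complex.exp (I * θ), Complex.exp (-(I * θ))] := by
  unfold Pθ
  ext i j
  fin_cases i <;> fin_cases j <;> simp [Matrix.diagonal]

lemma smul_Fvar (θ : ℝ) (t : ℝ) :
    (t : ℂ) • Fvar (Pθ θ) =
      Matrix.diagonal ![(t * Real.sin θ : ℝ) * I, -((t * Real.sin θ : ℝ) * I)] := by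
  have he : Complex.exp (I * θ) = Real.cos θ + Real.sin θ * I := by
    rw [mul_comm, Complex.exp_mul_I]; push_cast; ring_nf
  have he' : Complex.exp (-(I * θ)) = Real.cos θ - Real.sin θ * I := by
    rw [show -(I * (θ:ℂ)) = ((-θ:ℝ):ℂ) * I by push_cast; ring, Complex.exp_mul_I]
    push_cast
    simp [Complex.cos_neg, Complex.sin_neg]
    ring
  unfold Fvar
  ext i j
  fin_cases i <;> fin_cases j <;>
    simp [Pθ, Matrix.trace_fin_two, Matrix.diagonal, he, he'] <;> ring_nf

lemma zeta_diag (θ : ℝ) (t : ℝ) :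
    ζ θ t = Matrix.diagonal
      ![Complex.exp ((t * Real.sin θ : ℝ) * I), Complex.exp (-((t * Real.sin θ : ℝ) * I))] := by
  rw [ζ, smul_Fvar, Matrix.exp_diagonal]
  ext i j
  fin_cases i <;> fin_cases j <;>
    simp [Matrix.diagonal, Pi.coe_exp, ← Complex.exp_eq_exp_ℂ]

theorem zeta_eq_P_iff (θ : ℝ) (hθ : Real.sin θ ≠ 0) :
    (∀ t : ℝ, ζ θ t = Pθ θ ↔ ∃ k : ℤ, t * Real.sin θ = θ + 2 * Real.pi * k) ∧
    ζ θ (θ / Real.sin θ) = Pθ θ := by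
  have key : ∀ t : ℝ, ζ θ t = Pθ θ ↔ ∃ k : ℤ, t * Real.sin θ = θ + 2 * Real.pi * k := by
    intro t
    rw [zeta_diag, Pθ_diag]
    constructor
    · intro h
      have h00 := congrFun (congrFun h 0) 0
      simp [Matrix.diagonal] at h00
      rw [Complex.exp_eq_exp_iff_exists_int] at h00
      obtain ⟨n, hn⟩ := h00
      refine ⟨n, ?_⟩
      have := congrArg Complex.im hn
      simpa [mul_comm, Complex.sin_ofReal_re] using this
    · rintro ⟨k, hk⟩
      have h1 : ((t * Real.sin θ : ℝ) : ℂ) * I = I * θ + k * (2 * Real.pi * I) := by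
        rw [hk]; push_cast; ring
      have h2 : Complex.exp ((t * Real.sin θ : ℝ) * I) = Complex.exp (I * θ) := by
        rw [h1, Complex.exp_add]
        have : Complex.exp ((k : ℂ) * (2 * Real.pi * I)) = 1 := by
          simpa [mul_assoc] using Complex.exp_int_mul_two_pi_mul_I k
        rw [this, mul_one]
      have h3 : Complex.exp (-((t * Real.sin θ : ℝ) * I)) = Complex.exp (-(I * θ)) := by
        rw [Complex.exp_neg, Complex.exp_neg, h2]
      rw [h2, h3]
  refine ⟨key, ?_⟩
  rw [key]
  exact ⟨0, by field_simp; simp⟩
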